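/- Let ι be a finite nonempty index type and let M : ι → ι → ℝ have all entries strictly positive. Define the projective diameter Δ(M) = sup over strictly positive x, y : ι → ℝ of d_H(M x, M y), where (M x)_j = ∑_i M_{j i} · x_i. Then Δ(M) is finite, and for all strictly positive x, y, the Birkhoff–Hopf contraction estimate holds: d_H(M x, M y) ≤ tanh( Δ(M) / 4 ) · d_H(x, y). -/

import Mathlib

open Finset Real

/-- Hilbert projective metric on strictly positive vectors:
`d_H(x,y) = log (max_i x i / y i) - log (min_i x i / y i)`. -/
noncomputable def dH {ι : Type*} [Fintype ι] [Nonempty ι] (x y : ι → ℝ) : ℝ :=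
  Real.log (⨆ i, x i / y i) - Real.log (⨅ i, x i / y i)


/-- The set of Hilbert projective distances `d_H(M x, M y)` over strictly positive `x, y`,
where `(M x) j = ∑ i, M j i * x i`. Its supremum is the projective diameter `Δ(M)`. -/
def projDiamSet {ι : Type*} [Fintype ι] [Nonempty ι] (M : ι → ι → ℝ) : Set ℝ :=
  {d : ℝ | ∃ x y : ι → ℝ, (∀ i, 0 < x i) ∧ (∀ i, 0 < y i) ∧
    d = dH (fun j => ∑ i, M j i * x i) (fun j => ∑ i, M j i * y i)}

section helpers
variable {ι : Type*} [Fintype ι] [Nonempty ι]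

lemma exists_iSup_eq (f : ι → ℝ) : ∃ j, (⨆ i, f i) = f j ∧ ∀ k, f k ≤ f j := by
  obtain ⟨j, hj⟩ := Finite.exists_max f
  exact ⟨j, le_antisymm (ciSup_le hj) (le_ciSup (Finite.bddAbove_range f) j), hj⟩

lemma exists_iInf_eq (f : ι → ℝ) : ∃ j, (⨅ i, f i) = f j ∧ ∀ k, f j ≤ f k := by
  obtain ⟨j, hj⟩ := Finite.exists_min f
  exact ⟨j, le_antisymm (ciInf_le (Finite.bddBelow_range f) j) (le_ciInf hj), hj⟩

/-- dH of a vector with itself is 0. -/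
lemma dH_self (w : ι → ℝ) (hw : ∀ j, 0 < w j) : dH w w = 0 := by
  have h : ∀ j, w j / w j = 1 := fun j => div_self (ne_of_gt (hw j))
  simp only [dH]
  rw [show (⨆ i, w i / w i) = 1 by simp [h], show (⨅ i, w i / w i) = 1 by simp [h]]
  simp

lemma dH_le_of_ratio (A B : ι → ℝ) (hA : ∀ j, 0 < A j) (hB : ∀ j, 0 < B j) {K : ℝ}
    (hK : 0 < K) (h1 : ∀ j k, A j ≤ K * A k) (h2 : ∀ j k, B j ≤ K * B k) :
    dH A B ≤ Real.log (K^2) := by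
  obtain ⟨j, hj, hjmax⟩ := exists_iSup_eq (fun i => A i / B i)
  obtain ⟨k, hk, hkmin⟩ := exists_iInf_eq (fun i => A i / B i)
  have hr : A j / B j ≤ K^2 * (A k / B k) := by
    rw [div_le_iff₀ (hB j)]
    calc A j ≤ K * A k := h1 j k
      _ = K^2 * (A k / B k) * (B k / K) := by
          field_simp [hK.ne', (hB k).ne']
      _ ≤ K^2 * (A k / B k) * B j := by
          apply mul_le_mul_of_nonneg_left _
            (le_of_lt (mul_pos (pow_pos hK 2) (div_pos (hA k) (hB k))))
          rw [div_le_iff₀ hK]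
          linarith [h2 k j]
  have hlog := Real.log_le_log (div_pos (hA j) (hB j)) hr
  rw [Real.log_mul (ne_of_gt (pow_pos hK 2)) (ne_of_gt (div_pos (hA k) (hB k)))] at hlog
  simp only [dH]
  rw [hj, hk]
  linarith

end helpers

lemma tanh_formula (u : ℝ) :
    Real.tanh u = (Real.exp (2*u) - 1) / (Real.exp (2*u) + 1) := by
  have h2 : Real.exp (2*u) = Real.exp u * Real.exp u := by rw [two_mul, Real.exp_add]
  have h := Real.exp_pos u
  rw [Real.tanh_eq_sinh_div_cosh, Real.sinh_eq, Real.cosh_eq, Real.exp_neg, h2]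
  have hne : Real.exp u ≠ 0 := ne_of_gt h
  field_simp

lemma tanh_mono {a b : ℝ} (h : a ≤ b) : Real.tanh a ≤ Real.tanh b := by
  rw [tanh_formula, tanh_formula]
  have ha := Real.exp_pos (2*a)
  have hb := Real.exp_pos (2*b)
  have hab : Real.exp (2*a) ≤ Real.exp (2*b) := Real.exp_le_exp.2 (by linarith)
  rw [div_le_div_iff₀ (by linarith) (by linarith)]
  nlinarith

lemma tanh_nonneg' {a : ℝ} (h : 0 ≤ a) : 0 ≤ Real.tanh a := by
  have := tanh_mono h
  simpa [Real.tanh_zero] using this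

lemma tanh_le_one' (a : ℝ) : Real.tanh a ≤ 1 := by
  rw [tanh_formula]
  have := Real.exp_pos (2*a)
  rw [div_le_one (by linarith)]
  linarith

lemma kappa_eq_tanh {t T : ℝ} (ht : 0 < t) (htT : t ≤ T) :
    (Real.sqrt T - Real.sqrt t) / (Real.sqrt T + Real.sqrt t)
      = Real.tanh (Real.log (T / t) / 4) := by
  have hT : 0 < T := lt_of_lt_of_le ht htT
  have hst : 0 < Real.sqrt t := Real.sqrt_pos.2 ht
  have hsT : 0 < Real.sqrt T := Real.sqrt_pos.2 hT
  have hexp : Real.exp (2 * (Real.log (T / t) / 4)) = Real.sqrt T / Real.sqrt t := by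
    rw [show (2 * (Real.log (T / t) / 4)) = Real.log (T/t) * (1/2 : ℝ) by ring,
      ← Real.rpow_def_of_pos (div_pos hT ht), ← Real.sqrt_eq_rpow,
      Real.sqrt_div hT.le]
  rw [tanh_formula, hexp]
  field_simp

lemma key_ineq {α β t T : ℝ} (hα : 0 < α) (hαβ : α ≤ β) (ht : 0 < t) (htT : t ≤ T) :
    Real.log ((α + β*T) * (1+t)) - Real.log ((α + β*t) * (1+T)) ≤
      ((Real.sqrt T - Real.sqrt t) / (Real.sqrt T + Real.sqrt t))
        * (Real.log β - Real.log α) := by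
  have hT : 0 < T := lt_of_lt_of_le ht htT
  have hβ : 0 < β := lt_of_lt_of_le hα hαβ
  set st := Real.sqrt t with hst_def
  set sT := Real.sqrt T with hsT_def
  have hst : 0 < st := Real.sqrt_pos.2 ht
  have hsT : 0 < sT := Real.sqrt_pos.2 hT
  have hstT : st ≤ sT := Real.sqrt_le_sqrt htT
  have hst2 : st^2 = t := Real.sq_sqrt ht.le
  have hsT2 : sT^2 = T := Real.sq_sqrt hT.le
  set κ := (sT - st) / (sT + st) with hκ_def
  have hκ0 : 0 ≤ κ := div_nonneg (by linarith) (by linarith)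
  set G : ℝ → ℝ := fun w => Real.log (α + w*T) - Real.log (α + w*t) - κ * Real.log w
    with hG_def
  have hderiv : ∀ w ∈ Set.Ioi (0:ℝ),
      HasDerivAt G (T/(α + w*T) - t/(α + w*t) - κ * w⁻¹) w := by
    intro w hw
    have hw0 : (0:ℝ) < w := hw
    have h1 : (0:ℝ) < α + w*T := by positivity
    have h2 : (0:ℝ) < α + w*t := by positivity
    have d1 : HasDerivAt (fun w : ℝ => α + w*T) T w := by
      simpa using ((hasDerivAt_id w).mul_const T).const_add α
    have d2 : HasDerivAt (fun w : ℝ => α + w*t) t w := by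
      simpa using ((hasDerivAt_id w).mul_const t).const_add α
    have l1 := d1.log (ne_of_gt h1)
    have l2 := d2.log (ne_of_gt h2)
    have l3 := (Real.hasDerivAt_log (ne_of_gt hw0)).const_mul κ
    exact (l1.sub l2).sub l3
  have hanti : AntitoneOn G (Set.Ioi (0:ℝ)) := by
    apply antitoneOn_of_deriv_nonpos (convex_Ioi 0)
    · exact fun w hw => ((hderiv w hw).continuousAt).continuousWithinAt
    · rw [interior_Ioi]
      exact fun w hw => ((hderiv w hw).differentiableAt).differentiableWithinAt
    · rw [interior_Ioi]
      intro w hw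
      rw [(hderiv w hw).deriv]
      have hw0 : (0:ℝ) < w := hw
      have h1 : (0:ℝ) < α + w*T := by positivity
      have h2 : (0:ℝ) < α + w*t := by positivity
      have hdiff : T/(α + w*T) - t/(α + w*t) = α*(T-t) / ((α + w*T)*(α + w*t)) := by
        field_simp; ring
      have hrhs : κ * w⁻¹ = (sT - st)/((sT+st)*w) := by
        rw [hκ_def]; field_simp
      rw [hdiff, sub_nonpos, hrhs, div_le_div_iff₀ (by positivity) (by positivity),
        ← hst2, ← hsT2]
      nlinarith [mul_nonneg (sub_nonneg.2 hstT) (sq_nonneg (α - w * sT * st)),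
        hst.le, hsT.le, hw0.le, hα.le]
  have hG := hanti (Set.mem_Ioi.2 hα) (Set.mem_Ioi.2 hβ) hαβ
  -- G β ≤ G α
  have e1 : Real.log (α + α*T) = Real.log α + Real.log (1+T) := by
    rw [show α + α*T = α * (1+T) by ring, Real.log_mul (ne_of_gt hα) (by positivity)]
  have e2 : Real.log (α + α*t) = Real.log α + Real.log (1+t) := by
    rw [show α + α*t = α * (1+t) by ring, Real.log_mul (ne_of_gt hα) (by positivity)]
  have e3 : Real.log ((α + β*T) * (1+t)) = Real.log (α + β*T) + Real.log (1+t) := by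
    rw [Real.log_mul (by positivity) (by positivity)]
  have e4 : Real.log ((α + β*t) * (1+T)) = Real.log (α + β*t) + Real.log (1+T) := by
    rw [Real.log_mul (by positivity) (by positivity)]
  have hGβ : G β = Real.log (α + β*T) - Real.log (α + β*t) - κ * Real.log β := rfl
  have hGα : G α = Real.log (α + α*T) - Real.log (α + α*t) - κ * Real.log α := rfl
  rw [hGβ, hGα, e1, e2] at hG
  rw [e3, e4, hκ_def] at *
  linarith [hG]

set_option maxHeartbeats 1000000

/-- for a matrix `M` with all entries strictly positive, the projective
diameter `Δ(M) = sup {d_H(M x, M y) : x, y > 0}` is finite (the set of such distances is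
bounded above), and the Birkhoff–Hopf contraction estimate holds:
`d_H(M x, M y) ≤ tanh(Δ(M) / 4) * d_H(x, y)` for all strictly positive `x, y`. -/
theorem birkhoff_hopf_contraction {ι : Type*} [Fintype ι] [Nonempty ι]
    (M : ι → ι → ℝ) (hM : ∀ i j, 0 < M i j) :
    BddAbove (projDiamSet M) ∧
      ∀ x y : ι → ℝ, (∀ i, 0 < x i) → (∀ i, 0 < y i) →
        dH (fun j => ∑ i, M j i * x i) (fun j => ∑ i, M j i * y i) ≤
          Real.tanh (sSup (projDiamSet M) / 4) * dH x y := by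
  have hsumpos : ∀ (x : ι → ℝ), (∀ i, 0 < x i) → ∀ j, 0 < ∑ i, M j i * x i := by
    intro x hx j
    exact Finset.sum_pos (fun i _ => mul_pos (hM j i) (hx i)) Finset.univ_nonempty
  -- Part 1: bounded above
  obtain ⟨pmax, hmax⟩ := Finite.exists_max (fun p : ι × ι => M p.1 p.2)
  obtain ⟨pmin, hmin⟩ := Finite.exists_min (fun p : ι × ι => M p.1 p.2)
  set K := M pmax.1 pmax.2 / M pmin.1 pmin.2 with hK_def
  have hK : 0 < K := div_pos (hM _ _) (hM _ _)
  have hratio : ∀ (x : ι → ℝ), (∀ i, 0 < x i) → ∀ j k,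
      (∑ i, M j i * x i) ≤ K * ∑ i, M k i * x i := by
    intro x hx j k
    calc ∑ i, M j i * x i ≤ ∑ i, M pmax.1 pmax.2 * x i :=
          Finset.sum_le_sum (fun i _ => mul_le_mul_of_nonneg_right (hmax (j,i)) (hx i).le)
      _ = K * ∑ i, M pmin.1 pmin.2 * x i := by
          rw [← Finset.mul_sum, ← Finset.mul_sum, ← mul_assoc, hK_def,
            div_mul_cancel₀ _ (ne_of_gt (hM pmin.1 pmin.2))]
      _ ≤ K * ∑ i, M k i * x i := by
          apply mul_le_mul_of_nonneg_left _ hK.le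
          exact Finset.sum_le_sum (fun i _ => mul_le_mul_of_nonneg_right (hmin (k,i)) (hx i).le)
  have hBdd : BddAbove (projDiamSet M) := by
    refine ⟨Real.log (K^2), ?_⟩
    rintro d ⟨x, y, hx, hy, rfl⟩
    exact dH_le_of_ratio _ _ (hsumpos x hx) (hsumpos y hy) hK
      (fun j k => hratio x hx j k) (fun j k => hratio y hy j k)
  refine ⟨hBdd, ?_⟩
  intro x y hx hy
  set Δ := sSup (projDiamSet M) with hΔ_def
  have hΔ0 : 0 ≤ Δ := by
    have h0 : (0:ℝ) ∈ projDiamSet M := by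
      refine ⟨(fun _ => 1), (fun _ => 1), fun _ => one_pos, fun _ => one_pos, ?_⟩
      rw [dH_self _ (hsumpos (fun _ => 1) (fun _ => one_pos))]
    exact le_csSup hBdd h0
  have htanh0 : 0 ≤ Real.tanh (Δ/4) := tanh_nonneg' (by linarith)
  have htanh1 : Real.tanh (Δ/4) ≤ 1 := tanh_le_one' _
  set z := fun i => x i / y i with hz_def
  obtain ⟨iβ, hβeq, hβmax⟩ := exists_iSup_eq z
  obtain ⟨iα, hαeq, hαmin⟩ := exists_iInf_eq z
  have hzpos : ∀ i, 0 < z i := fun i => div_pos (hx i) (hy i)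
  have hdxy : dH x y = Real.log (z iβ) - Real.log (z iα) := by
    simp only [dH]
    rw [show (⨆ i, x i / y i) = z iβ from hβeq, show (⨅ i, x i / y i) = z iα from hαeq]
  apply le_of_forall_pos_le_add
  intro ε hε
  set δ := ε/2 with hδ_def
  have hδ0 : 0 < δ := by positivity
  set β' := z iβ * Real.exp δ with hβ'_def
  set α' := z iα * Real.exp (-δ) with hα'_def
  have hα'0 : 0 < α' := mul_pos (hzpos iα) (Real.exp_pos _)
  have hα'lt : ∀ i, α' < z i := by
    intro i
    have h1 : Real.exp (-δ) < 1 := Real.exp_lt_one_iff.2 (by linarith)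
    calc α' < z iα := by nlinarith [hzpos iα]
      _ ≤ z i := hαmin i
  have hβ'gt : ∀ i, z i < β' := by
    intro i
    have h1 : 1 < Real.exp δ := Real.one_lt_exp_iff.2 hδ0
    calc z i ≤ z iβ := hβmax i
      _ < β' := by nlinarith [hzpos iβ]
  have hαβ' : α' < β' := lt_trans (hα'lt iα) (hβ'gt iα)
  have hβα : 0 < β' - α' := by linarith
  set p := fun i => (β' * y i - x i)/(β' - α') with hp_def
  set q := fun i => (x i - α' * y i)/(β' - α') with hq_def
  have hp : ∀ i, 0 < p i := by
    intro i
    have : x i < β' * y i := (div_lt_iff₀ (hy i)).1 (hβ'gt i)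
    exact div_pos (by linarith) hβα
  have hq : ∀ i, 0 < q i := by
    intro i
    have : α' * y i < x i := (lt_div_iff₀ (hy i)).1 (hα'lt i)
    exact div_pos (by linarith) hβα
  set P := fun j => ∑ i, M j i * p i with hP_def
  set Q := fun j => ∑ i, M j i * q i with hQ_def
  have hPpos : ∀ j, 0 < P j := hsumpos p hp
  have hQpos : ∀ j, 0 < Q j := hsumpos q hq
  have hxpq : ∀ i, α' * p i + β' * q i = x i := by
    intro i
    simp only [hp_def, hq_def]
    rw [mul_div_assoc', mul_div_assoc', ← add_div, div_eq_iff hβα.ne']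
    ring
  have hypq : ∀ i, p i + q i = y i := by
    intro i
    simp only [hp_def, hq_def]
    rw [← add_div, div_eq_iff hβα.ne']
    ring
  have hAj : ∀ j, (∑ i, M j i * x i) = α' * P j + β' * Q j := by
    intro j
    rw [hP_def, hQ_def]
    simp only [Finset.mul_sum, ← Finset.sum_add_distrib]
    exact Finset.sum_congr rfl (fun i _ => by rw [← hxpq i]; ring)
  have hBj : ∀ j, (∑ i, M j i * y i) = P j + Q j := by
    intro j
    rw [hP_def, hQ_def, ← Finset.sum_add_distrib]
    exact Finset.sum_congr rfl (fun i _ => by rw [← hypq i]; ring)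
  set r := fun j => Q j / P j with hr_def
  obtain ⟨jT, hTeq, hTmax⟩ := exists_iSup_eq r
  obtain ⟨jt, hteq, htmin⟩ := exists_iInf_eq r
  set T := r jT with hT_def
  set t := r jt with ht_def
  have hrpos : ∀ j, 0 < r j := fun j => div_pos (hQpos j) (hPpos j)
  have ht0 : 0 < t := hrpos jt
  have hT0 : 0 < T := hrpos jT
  have htT : t ≤ T := htmin jT
  have hβ'0 : 0 < β' := lt_trans hα'0 hαβ'
  have hAB : ∀ j, (∑ i, M j i * x i) / (∑ i, M j i * y i)
      = (α' + β' * r j)/(1 + r j) := by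
    intro j
    have hQr : Q j = r j * P j := by
      rw [hr_def]
      exact (div_mul_cancel₀ _ (hPpos j).ne').symm
    rw [hAj j, hBj j, hQr,
      show α'*P j + β'*(r j*P j) = P j * (α' + β'*r j) by ring,
      show P j + r j*P j = P j * (1+r j) by ring,
      mul_div_mul_left _ _ (hPpos j).ne']
  have hmono : ∀ u v : ℝ, 0 < u → 0 < v → u ≤ v →
      (α' + β'*u)/(1+u) ≤ (α'+β'*v)/(1+v) := by
    intro u v hu hv huv
    rw [div_le_div_iff₀ (by linarith) (by linarith)]
    nlinarith
  have hsup : (⨆ j, (∑ i, M j i * x i) / (∑ i, M j i * y i)) = (α' + β'*T)/(1+T) := by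
    refine le_antisymm (ciSup_le fun j => ?_) ?_
    · rw [hAB j]; exact hmono _ _ (hrpos j) hT0 (hTmax j)
    · rw [← hAB jT]
      exact le_ciSup (f := fun j => (∑ i, M j i * x i) / (∑ i, M j i * y i))
        (Finite.bddAbove_range _) jT
  have hinf : (⨅ j, (∑ i, M j i * x i) / (∑ i, M j i * y i)) = (α' + β'*t)/(1+t) := by
    refine le_antisymm ?_ (le_ciInf fun j => ?_)
    · rw [← hAB jt]
      exact ciInf_le (f := fun j => (∑ i, M j i * x i) / (∑ i, M j i * y i))
        (Finite.bddBelow_range _) jt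
    · rw [hAB j]; exact hmono _ _ ht0 (hrpos j) (htmin j)
  have hdAB : dH (fun j => ∑ i, M j i * x i) (fun j => ∑ i, M j i * y i)
      = Real.log ((α'+β'*T)*(1+t)) - Real.log ((α'+β'*t)*(1+T)) := by
    have e1 : (0:ℝ) < α' + β'*T := by nlinarith
    have e2 : (0:ℝ) < α' + β'*t := by nlinarith
    have e3 : (0:ℝ) < 1 + T := by linarith
    have e4 : (0:ℝ) < 1 + t := by linarith
    simp only [dH]
    rw [hsup, hinf, Real.log_div e1.ne' e3.ne', Real.log_div e2.ne' e4.ne',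
      Real.log_mul e1.ne' e4.ne', Real.log_mul e2.ne' e3.ne']
    ring
  have hkey := key_ineq hα'0 hαβ'.le ht0 htT
  have hmem : dH (fun j => ∑ i, M j i * q i) (fun j => ∑ i, M j i * p i)
      ∈ projDiamSet M := ⟨q, p, hq, hp, rfl⟩
  have hQP : dH (fun j => ∑ i, M j i * q i) (fun j => ∑ i, M j i * p i)
      = Real.log (T/t) := by
    simp only [dH]
    rw [show (⨆ j, (∑ i, M j i * q i) / (∑ i, M j i * p i)) = T from hTeq,
      show (⨅ j, (∑ i, M j i * q i) / (∑ i, M j i * p i)) = t from hteq,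
      Real.log_div (ne_of_gt hT0) (ne_of_gt ht0)]
  have hlogTt : Real.log (T/t) ≤ Δ := by
    rw [← hQP]; exact le_csSup hBdd hmem
  have hκle : (Real.sqrt T - Real.sqrt t)/(Real.sqrt T + Real.sqrt t)
      ≤ Real.tanh (Δ/4) := by
    rw [kappa_eq_tanh ht0 htT]
    exact tanh_mono (by linarith)
  have hloggap : 0 ≤ Real.log β' - Real.log α' :=
    sub_nonneg.2 (Real.log_le_log hα'0 hαβ'.le)
  have hlogcomp : Real.log β' - Real.log α'
      = (Real.log (z iβ) - Real.log (z iα)) + 2*δ := by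
    rw [hβ'_def, hα'_def, Real.log_mul (ne_of_gt (hzpos iβ)) (Real.exp_ne_zero _),
      Real.log_mul (ne_of_gt (hzpos iα)) (Real.exp_ne_zero _),
      Real.log_exp, Real.log_exp]
    ring
  have hchain : dH (fun j => ∑ i, M j i * x i) (fun j => ∑ i, M j i * y i)
      ≤ Real.tanh (Δ/4) * (Real.log β' - Real.log α') := by
    rw [hdAB]
    exact le_trans hkey (mul_le_mul_of_nonneg_right hκle hloggap)
  rw [hdxy]
  rw [hlogcomp] at hchain
  have hd0 : 0 ≤ Real.log (z iβ) - Real.log (z iα) :=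
    sub_nonneg.2 (Real.log_le_log (hzpos iα) (hαmin iβ))
  nlinarith [hchain, htanh0, htanh1, hδ0]
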